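/- If ξ ∈ l²(ℤ) satisfies Vξ = f e₀, where V is the operator (Vq)_k = ω²(2q_k − q_{k+1} − q_{k−1}) + ω₀² q_k and e₀ is the standard unit vector at index 0, then the potential energy U_ξ = (1/2)(Vξ, ξ) − f ξ₀ equals −(1/2) f ξ₀ = −f² / (2 ω₀ √(4ω² + ω₀²)), which is strictly negative when f ≠ 0. -/

import Mathlib

/-- If a sequence satisfies the linear recurrence `g(n+2) + g n = a * g(n+1)` and tends to 0,
and `r ∈ (0,1)` is a root of `x^2 - a x + 1`, then `g 1 = r * g 0`. -/
lemma aux_rec (r a : ℝ) (hr0 : 0 < r) (hr1 : r < 1)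
    (hra : r ^ 2 - a * r + 1 = 0) (g : ℕ → ℝ)
    (hrec : ∀ n : ℕ, g (n + 2) + g n = a * g (n + 1))
    (hg : Filter.Tendsto g Filter.atTop (nhds 0)) :
    g 1 = r * g 0 := by
  have key : ∀ n : ℕ, r ^ n * (g (n + 1) - r * g n) = g 1 - r * g 0 := by
    intro n
    induction n with
    | zero => simp
    | succ n ih =>
      rw [← ih]
      have hg2 : g (n + 2) = a * g (n + 1) - g n := by linarith [hrec n]
      rw [hg2]
      linear_combination (-(r ^ n * g (n + 1))) * hra
  have hlim : Filter.Tendsto (fun n : ℕ => r ^ n * (g (n + 1) - r * g n))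
      Filter.atTop (nhds (0 * (0 - r * 0))) := by
    apply Filter.Tendsto.mul
    · exact tendsto_pow_atTop_nhds_zero_of_lt_one hr0.le hr1
    · exact ((hg.comp (Filter.tendsto_add_atTop_nat 1)).sub (hg.const_mul r))
  simp only [key] at hlim
  have := tendsto_nhds_unique hlim tendsto_const_nhds
  simp at this
  linarith [this]


/-- If `ξ ∈ ℓ²(ℤ)` satisfies `Vξ = f e₀` (coordinatewise), then the potential energy
`U_ξ = (1/2)(Vξ, ξ) − f ξ₀` equals `−(1/2) f ξ₀ = −f²/(2ω₀√(4ω² + ω₀²))`,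
strictly negative for `f ≠ 0`. -/
theorem stmt_5 (ω ω₀ f : ℝ) (hω : 0 < ω) (hω₀ : 0 < ω₀)
    (ξ : ℤ → ℝ) (hξ2 : Memℓp ξ 2)
    (hVξ : ∀ k : ℤ, ω ^ 2 * (2 * ξ k - ξ (k + 1) - ξ (k - 1)) + ω₀ ^ 2 * ξ k
      = f * (if k = 0 then 1 else 0)) :
    (1 / 2) * (∑' k : ℤ,
        (ω ^ 2 * (2 * ξ k - ξ (k + 1) - ξ (k - 1)) + ω₀ ^ 2 * ξ k) * ξ k) - f * ξ 0
      = -(1 / 2) * f * ξ 0 ∧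
    -(1 / 2) * f * ξ 0 = -(f ^ 2 / (2 * ω₀ * Real.sqrt (4 * ω ^ 2 + ω₀ ^ 2))) ∧
    (f ≠ 0 → -(1 / 2) * f * ξ 0 < 0) := by
  -- the sum collapses
  have hsum : (∑' k : ℤ,
      (ω ^ 2 * (2 * ξ k - ξ (k + 1) - ξ (k - 1)) + ω₀ ^ 2 * ξ k) * ξ k) = f * ξ 0 := by
    have hcongr : ∀ k : ℤ,
        (ω ^ 2 * (2 * ξ k - ξ (k + 1) - ξ (k - 1)) + ω₀ ^ 2 * ξ k) * ξ k
          = if k = 0 then f * ξ 0 else 0 := by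
      intro k
      rw [hVξ k]
      by_cases h : k = 0 <;> simp [h]
    rw [tsum_congr hcongr, tsum_ite_eq]
  -- ξ tends to zero along cofinite
  have hsq : Summable (fun k : ℤ => ‖ξ k‖ ^ 2) := by
    have := Memℓp.summable (p := 2) (by norm_num) hξ2
    simpa using this
  have htend : Filter.Tendsto ξ Filter.cofinite (nhds 0) := by
    rw [tendsto_zero_iff_norm_tendsto_zero]
    have h2 : Filter.Tendsto (fun k => Real.sqrt (‖ξ k‖ ^ 2)) Filter.cofinite (nhds 0) := by
      have := (Real.continuous_sqrt.tendsto 0).comp hsq.tendsto_cofinite_zero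
      simpa only [Real.sqrt_zero, Function.comp_def] using this
    have he : (fun k : ℤ => ‖ξ k‖) = fun k => Real.sqrt (‖ξ k‖ ^ 2) := by
      funext k; rw [Real.sqrt_sq (norm_nonneg _)]
    rw [he]; exact h2
  have htop : Filter.Tendsto ξ Filter.atTop (nhds 0) :=
    htend.mono_left (Int.cofinite_eq ▸ le_sup_right)
  have hbot : Filter.Tendsto ξ Filter.atBot (nhds 0) :=
    htend.mono_left (Int.cofinite_eq ▸ le_sup_left)
  -- the decaying root
  set s := Real.sqrt (4 * ω ^ 2 + ω₀ ^ 2) with hs_def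
  have hs0 : 0 < s := Real.sqrt_pos.mpr (by positivity)
  have hs2 : s ^ 2 = 4 * ω ^ 2 + ω₀ ^ 2 := Real.sq_sqrt (by positivity)
  have hω₀s : ω₀ < s := by nlinarith
  set a : ℝ := (2 * ω ^ 2 + ω₀ ^ 2) / ω ^ 2 with ha_def
  set r : ℝ := (2 * ω ^ 2 + ω₀ ^ 2 - ω₀ * s) / (2 * ω ^ 2) with hr_def
  have hω2 : (0:ℝ) < ω ^ 2 := by positivity
  have hr0 : 0 < r := by
    apply div_pos _ (by positivity)
    nlinarith
  have hr1 : r < 1 := by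
    rw [hr_def, div_lt_one (by positivity)]
    nlinarith
  have hroot : r ^ 2 - a * r + 1 = 0 := by
    rw [hr_def, ha_def]
    field_simp
    linear_combination ω₀ ^ 2 * hs2
  -- right half-line
  have hplus : ξ 1 = r * ξ 0 := by
    have := aux_rec r a hr0 hr1 hroot (fun n : ℕ => ξ (n : ℤ))
      (fun n => by
        have h := hVξ ((n : ℤ) + 1)
        rw [if_neg (by positivity)] at h
        have e1 : ((n : ℤ) + 1 + 1) = ((n + 2 : ℕ) : ℤ) := by push_cast; ring
        have e2 : ((n : ℤ) + 1 - 1) = ((n : ℕ) : ℤ) := by push_cast; ring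
        have e3 : ((n : ℤ) + 1) = ((n + 1 : ℕ) : ℤ) := by push_cast; ring
        rw [e1, e2, e3, mul_zero] at h
        rw [ha_def, div_mul_eq_mul_div, eq_div_iff hω2.ne']
        linarith)
      (htop.comp tendsto_natCast_atTop_atTop)
    simpa using this
  -- left half-line
  have hminus : ξ (-1) = r * ξ 0 := by
    have := aux_rec r a hr0 hr1 hroot (fun n : ℕ => ξ (-(n : ℤ)))
      (fun n => by
        have h := hVξ (-((n : ℤ) + 1))
        rw [if_neg (by intro hc; omega)] at h
        have e1 : (-((n : ℤ) + 1) + 1) = -((n : ℕ) : ℤ) := by push_cast; ring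
        have e2 : (-((n : ℤ) + 1) - 1) = -((n + 2 : ℕ) : ℤ) := by push_cast; ring
        have e3 : (-((n : ℤ) + 1)) = -((n + 1 : ℕ) : ℤ) := by push_cast; ring
        rw [e1, e2, e3, mul_zero] at h
        rw [ha_def, div_mul_eq_mul_div, eq_div_iff hω2.ne']
        linarith)
      (hbot.comp (Filter.tendsto_neg_atTop_atBot.comp tendsto_natCast_atTop_atTop))
    simpa using this
  -- solve for ξ 0
  have h0 := hVξ 0
  rw [if_pos rfl] at h0
  norm_num at h0
  rw [hplus, hminus] at h0
  have h2ωr : 2 * ω ^ 2 * r = 2 * ω ^ 2 + ω₀ ^ 2 - ω₀ * s := by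
    rw [hr_def]; field_simp
  have hξ0 : ω₀ * s * ξ 0 = f := by linear_combination h0 + ξ 0 * h2ωr
  have hval : ξ 0 = f / (ω₀ * s) := by
    field_simp at hξ0 ⊢
    linarith
  refine ⟨by rw [hsum]; ring, ?_, ?_⟩
  · rw [hval]; field_simp
  · intro hf
    rw [hval]
    have : 0 < f ^ 2 / (ω₀ * s) := by positivity
    have hre : -(1/2) * f * (f / (ω₀ * s)) = -(f ^ 2 / (ω₀ * s)) / 2 := by ring
    rw [hre]
    linarith
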